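/- (Strong convexity of the per-arc social cost for latency functions with derivative bounded below, corrected version of the footnote in Lemma 1.) Let m > 0 and let s : ℝ → ℝ be differentiable and convex on [0,∞) with (deriv s)(x) ≥ m for all x ≥ 0. Then the function x ↦ x · s(x) is strongly convex with parameter 2m on the set [0,∞), i.e., the function x ↦ x · s(x) − m·x² is convex on [0,∞). -/

import Mathlib

private lemma key_slope (m : ℝ) (s : ℝ → ℝ)
    (hdiff : DifferentiableOn ℝ s (Set.Ici (0:ℝ)))
    (hderiv : ∀ x : ℝ, 0 ≤ x → m ≤ deriv s x)
    {x y : ℝ} (hx : 0 ≤ x) (hy : 0 ≤ y) (hxy : x < y) :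
    m * (y - x) ≤ s y - s x := by
  obtain ⟨c, hc, hcd⟩ := exists_hasDerivAt_eq_slope s (deriv s) hxy
    (hdiff.continuousOn.mono (Set.Icc_subset_Ici_iff hxy.le |>.mpr hx))
    (fun z hz => by
      have hz0 : (0:ℝ) < z := lt_of_le_of_lt hx hz.1
      have := (hdiff z (le_of_lt hz0)).differentiableAt (Ici_mem_nhds hz0)
      exact this.hasDerivAt)
  have hc0 : 0 ≤ c := le_trans hx hc.1.le
  have hmc := hderiv c hc0
  rw [hcd] at hmc
  have hyx : 0 < y - x := by linarith
  have := (le_div_iff₀ hyx).mp hmc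
  linarith

private lemma key_mono (m : ℝ) (s : ℝ → ℝ)
    (hdiff : DifferentiableOn ℝ s (Set.Ici (0:ℝ)))
    (hderiv : ∀ x : ℝ, 0 ≤ x → m ≤ deriv s x)
    {x y : ℝ} (hx : 0 ≤ x) (hy : 0 ≤ y) :
    m * (y - x) ^ 2 ≤ (s y - s x) * (y - x) := by
  rcases lt_trichotomy x y with h | h | h
  · have := key_slope m s hdiff hderiv hx hy h
    nlinarith
  · subst h; simp
  · have := key_slope m s hdiff hderiv hy hx h
    nlinarith

private lemma conv_aux (m : ℝ) (s : ℝ → ℝ)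
    (hdiff : DifferentiableOn ℝ s (Set.Ici (0:ℝ)))
    (hconv : ConvexOn ℝ (Set.Ici (0:ℝ)) s)
    (hderiv : ∀ x : ℝ, 0 ≤ x → m ≤ deriv s x) :
    ConvexOn ℝ (Set.Ici (0:ℝ)) (fun x : ℝ => x * s x - m * x ^ 2) := by
  refine ⟨convex_Ici 0, fun x hx y hy a b ha hb hab => ?_⟩
  simp only [smul_eq_mul] at *
  have hx0 : (0:ℝ) ≤ x := hx
  have hy0 : (0:ℝ) ≤ y := hy
  have hz0 : (0:ℝ) ≤ a * x + b * y := by positivity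
  have hs := hconv.2 hx hy ha hb hab
  simp only [smul_eq_mul] at hs
  have hkey := key_mono m s hdiff hderiv hx0 hy0
  have hzs : (a * x + b * y) * s (a * x + b * y) ≤ (a * x + b * y) * (a * s x + b * s y) :=
    mul_le_mul_of_nonneg_left hs hz0
  have hab2 := mul_le_mul_of_nonneg_left hkey (mul_nonneg ha hb)
  have hb1 : b = 1 - a := by linarith
  subst hb1
  nlinarith [hab2, hzs]

theorem social_cost_strongly_convex (m : ℝ) (hm : 0 < m) (s : ℝ → ℝ)
    (hdiff : DifferentiableOn ℝ s (Set.Ici (0:ℝ)))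
    (hconv : ConvexOn ℝ (Set.Ici (0:ℝ)) s)
    (hderiv : ∀ x : ℝ, 0 ≤ x → m ≤ deriv s x) :
    StrongConvexOn (Set.Ici (0:ℝ)) (2 * m) (fun x : ℝ => x * s x) ∧
    ConvexOn ℝ (Set.Ici (0:ℝ)) (fun x : ℝ => x * s x - m * x ^ 2) := by
  have hc := conv_aux m s hdiff hconv hderiv
  refine ⟨?_, hc⟩
  rw [strongConvexOn_iff_convex]
  convert hc using 2 with x
  · rfl
  · rfl
  rw [Real.norm_eq_abs, sq_abs]
  ring
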